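/- (Partial q-difference equation in x for 2D q-Appell polynomials.) Assume a_0 ≠ 0. Then for every n ≥ 1: Σ_{k=1}^{n} (q^{n−k}/[k]_q!) (α_k + [k]_q β_{k−1} y) D_{q,x}^{k} A_{n,q}(x,y) + q^{n} x · D_{q,x} A_{n,q}(x,y) − [n]_q · A_{n,q}(qx,y) = 0, where A_{n,q}(qx,y) denotes the polynomial obtained from A_{n,q}(x,y) by substituting qx for x. -/

import Mathlib

set_option maxHeartbeats 1000000

noncomputable section

open Finset MvPolynomial

/-- The `q`-integer `[n]_q = 1 + q + ⋯ + q^(n-1)`. -/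
def qInt {K : Type*} [Field K] (q : K) (n : ℕ) : K := ∑ i ∈ Finset.range n, q ^ i

/-- The `q`-factorial `[n]_q! = [1]_q [2]_q ⋯ [n]_q`. -/
def qFact {K : Type*} [Field K] (q : K) (n : ℕ) : K := ∏ k ∈ Finset.range n, qInt q (k + 1)

/-- The `q`-binomial coefficient `[n choose k]_q`. -/
def qChoose {K : Type*} [Field K] (q : K) (n k : ℕ) : K :=
  qFact q n / (qFact q k * qFact q (n - k))

/-- The partial `q`-derivative in the variable `v` (v = 0 is `x`, v = 1 is `y`),
the linear operator determined by `D_{q,x}(x^m y^l) = [m]_q x^(m-1) y^l` and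
`D_{q,y}(x^m y^l) = [l]_q x^m y^(l-1)`. -/
def qDeriv {K : Type*} [Field K] (q : K) (v : Fin 2) (P : MvPolynomial (Fin 2) K) :
    MvPolynomial (Fin 2) K :=
  ∑ m ∈ P.support, monomial (m - Finsupp.single v 1) (P.coeff m * qInt q (m v))

/-- Substitution `x ↦ c·x` in a polynomial in the two variables `x = X 0`, `y = X 1`. -/
def substX {K : Type*} [Field K] (c : K) (P : MvPolynomial (Fin 2) K) :
    MvPolynomial (Fin 2) K :=
  aeval (fun i : Fin 2 => if i = 0 then C c * X 0 else X 1) P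

/-- Substitution `y ↦ c·y` in a polynomial in the two variables `x = X 0`, `y = X 1`. -/
def substY {K : Type*} [Field K] (c : K) (P : MvPolynomial (Fin 2) K) :
    MvPolynomial (Fin 2) K :=
  aeval (fun i : Fin 2 => if i = 0 then X 0 else C c * X 1) P

/-- The 2D `q`-Appell polynomials attached to a coefficient sequence `a`:
`A_{n,q}(x,y) = Σ_{i+j+k=n} ([n]_q!/([i]_q![j]_q![k]_q!)) a_i q^(k(k-1)/2) x^j y^k`. -/
def appell {K : Type*} [Field K] (q : K) (a : ℕ → K) (n : ℕ) : MvPolynomial (Fin 2) K :=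
  ∑ i ∈ Finset.range (n + 1), ∑ j ∈ Finset.range (n + 1 - i),
    monomial (Finsupp.single (0 : Fin 2) j + Finsupp.single (1 : Fin 2) (n - i - j))
      (qFact q n / (qFact q i * qFact q j * qFact q (n - i - j)) * a i *
        q ^ ((n - i - j) * (n - i - j - 1) / 2))

/-! ### Auxiliary lemmas -/

section Aux

variable {K : Type*} [Field K]

lemma qInt_zero (q : K) : qInt q 0 = 0 := by simp [qInt]

lemma qFact_zero (q : K) : qFact q 0 = 1 := by simp [qFact]

lemma qFact_succ (q : K) (n : ℕ) : qFact q (n+1) = qFact q n * qInt q (n+1) := by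
  simp [qFact, Finset.prod_range_succ]

lemma qInt_add (q : K) (a b : ℕ) : qInt q (a+b) = qInt q a + q^a * qInt q b := by
  simp [qInt, Finset.sum_range_add, Finset.mul_sum, pow_add]

lemma qFact_add (q : K) (a b : ℕ) :
    qFact q (a+b) = qFact q a * ∏ i ∈ Finset.range b, qInt q (a+i+1) := by
  simp [qFact, Finset.prod_range_add, add_assoc]

lemma qFact_ne_zero {q : K} (hq : ∀ n : ℕ, 1 ≤ n → qInt q n ≠ 0) (n : ℕ) : qFact q n ≠ 0 :=
  Finset.prod_ne_zero_iff.2 fun k _ => hq (k+1) (Nat.le_add_left 1 k)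

lemma pair_apply_zero (j l : ℕ) :
    ((Finsupp.single (0 : Fin 2) j + Finsupp.single (1 : Fin 2) l : Fin 2 →₀ ℕ)) 0 = j := by
  simp

lemma pair_apply_one (j l : ℕ) :
    ((Finsupp.single (0 : Fin 2) j + Finsupp.single (1 : Fin 2) l : Fin 2 →₀ ℕ)) 1 = l := by
  simp

lemma pair_eq_iff {a b c d : ℕ} :
    Finsupp.single (0 : Fin 2) a + Finsupp.single (1 : Fin 2) b =
      Finsupp.single (0 : Fin 2) c + Finsupp.single (1 : Fin 2) d ↔ a = c ∧ b = d := by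
  constructor
  · intro h
    have h0 := DFunLike.congr_fun h 0
    have h1 := DFunLike.congr_fun h 1
    simp at h0 h1
    exact ⟨h0, h1⟩
  · rintro ⟨rfl, rfl⟩; rfl

lemma finsupp_fin2_eq (d : Fin 2 →₀ ℕ) :
    d = Finsupp.single (0 : Fin 2) (d 0) + Finsupp.single (1 : Fin 2) (d 1) := by
  ext i
  fin_cases i <;> simp

lemma pair_add_single0 (j l k : ℕ) :
    (Finsupp.single (0 : Fin 2) j + Finsupp.single (1 : Fin 2) l) + Finsupp.single 0 k
      = Finsupp.single (0 : Fin 2) (j+k) + Finsupp.single (1 : Fin 2) l := by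
  ext i
  fin_cases i <;> simp

lemma pair_sub_single0 (j l : ℕ) :
    (Finsupp.single (0 : Fin 2) j + Finsupp.single (1 : Fin 2) l) - Finsupp.single 0 1
      = Finsupp.single (0 : Fin 2) (j-1) + Finsupp.single (1 : Fin 2) l := by
  ext i
  fin_cases i <;> simp [Finsupp.tsub_apply]

lemma pair_sub_single1 (j l : ℕ) :
    (Finsupp.single (0 : Fin 2) j + Finsupp.single (1 : Fin 2) l) - Finsupp.single 1 1
      = Finsupp.single (0 : Fin 2) j + Finsupp.single (1 : Fin 2) (l-1) := by
  ext i
  fin_cases i <;> simp [Finsupp.tsub_apply]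

lemma coeff_qDeriv (q : K) (v : Fin 2) (P : MvPolynomial (Fin 2) K) (d : Fin 2 →₀ ℕ) :
    coeff d (qDeriv q v P) = qInt q (d v + 1) * coeff (d + Finsupp.single v 1) P := by
  rw [qDeriv, coeff_sum]
  rw [Finset.sum_eq_single (d + Finsupp.single v 1)]
  · rw [coeff_monomial, if_pos (add_tsub_cancel_right _ _)]
    have : ((d + Finsupp.single v 1 : Fin 2 →₀ ℕ)) v = d v + 1 := by simp
    rw [this]; ring
  · intro m hm hne
    rw [coeff_monomial]
    by_cases hmv : m v = 0
    · rw [hmv, qInt_zero, mul_zero, ite_self]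
    · rw [if_neg]
      intro hEq
      apply hne
      have : m = (m - Finsupp.single v 1) + Finsupp.single v 1 := by
        ext i
        by_cases hi : i = v
        · subst hi; simp [Finsupp.tsub_apply]; omega
        · simp [Finsupp.tsub_apply, Finsupp.single_apply, Ne.symm hi, hi]
      rw [this, hEq]
  · intro h
    rw [coeff_monomial, if_pos (add_tsub_cancel_right _ _), notMem_support_iff.1 h, zero_mul]

lemma coeff_qDeriv_iter (q : K) (k : ℕ) (P : MvPolynomial (Fin 2) K) (d : Fin 2 →₀ ℕ) :
    coeff d ((qDeriv q 0)^[k] P) =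
      (∏ i ∈ Finset.range k, qInt q (d 0 + i + 1)) * coeff (d + Finsupp.single 0 k) P := by
  induction k generalizing d with
  | zero => simp
  | succ k ih =>
    rw [Function.iterate_succ_apply', coeff_qDeriv, ih]
    have h1 : ((d + Finsupp.single 0 1 : Fin 2 →₀ ℕ)) 0 = d 0 + 1 := by simp
    have h2 : d + Finsupp.single (0 : Fin 2) 1 + Finsupp.single 0 k
        = d + Finsupp.single 0 (k+1) := by
      rw [add_assoc, ← Finsupp.single_add, Nat.add_comm]
    rw [h1, h2, Finset.prod_range_succ']
    have h3 : ∀ i, d 0 + 1 + i + 1 = d 0 + (i+1) + 1 := by omega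
    simp only [h3]
    ring

/-- The coefficient of `x^J y^L` in the Appell polynomial `A_{n,q}`. -/
def acoeff (q : K) (a : ℕ → K) (n J L : ℕ) : K :=
  if J + L ≤ n then
    qFact q n / (qFact q (n - J - L) * qFact q J * qFact q L) * a (n - J - L) *
      q ^ (L * (L - 1) / 2)
  else 0

lemma coeff_appell (q : K) (a : ℕ → K) (n j l : ℕ) :
    coeff (Finsupp.single (0 : Fin 2) j + Finsupp.single (1 : Fin 2) l) (appell q a n) =
      acoeff q a n j l := by
  rw [appell, coeff_sum, acoeff]
  have hinner : ∀ i ∈ Finset.range (n+1),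
      (coeff (Finsupp.single (0 : Fin 2) j + Finsupp.single (1 : Fin 2) l)
        (∑ j' ∈ Finset.range (n + 1 - i),
          monomial (Finsupp.single (0 : Fin 2) j' + Finsupp.single (1 : Fin 2) (n - i - j'))
            (qFact q n / (qFact q i * qFact q j' * qFact q (n - i - j')) * a i *
              q ^ ((n - i - j') * (n - i - j' - 1) / 2)))) =
      if i = n - j - l ∧ j + l ≤ n then
        qFact q n / (qFact q (n - j - l) * qFact q j * qFact q l) * a (n - j - l) *
          q ^ (l * (l - 1) / 2)
      else 0 := by
    intro i hi
    rw [Finset.mem_range] at hi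
    rw [coeff_sum]
    by_cases hc : i = n - j - l ∧ j + l ≤ n
    · obtain ⟨rfl, hjl⟩ := hc
      rw [Finset.sum_eq_single j]
      · rw [coeff_monomial, if_pos]
        · rw [if_pos ⟨rfl, hjl⟩]
          have e1 : n - (n - j - l) - j = l := by omega
          rw [e1]
        · rw [pair_eq_iff]; exact ⟨rfl, by omega⟩
      · intro j' hj' hne
        rw [Finset.mem_range] at hj'
        rw [coeff_monomial, if_neg]
        rw [pair_eq_iff]
        rintro ⟨rfl, -⟩; exact hne rfl
      · intro hj
        rw [Finset.mem_range] at hj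
        omega
    · rw [if_neg hc]
      apply Finset.sum_eq_zero
      intro j' hj'
      rw [Finset.mem_range] at hj'
      rw [coeff_monomial, if_neg]
      rw [pair_eq_iff]
      rintro ⟨rfl, h2⟩
      exact hc ⟨by omega, by omega⟩
  rw [Finset.sum_congr rfl hinner]
  by_cases h : j + l ≤ n
  · rw [Finset.sum_eq_single (n - j - l)]
    · rw [if_pos ⟨rfl, h⟩, if_pos h]
    · intro i _ hne
      rw [if_neg]; rintro ⟨rfl, -⟩; exact hne rfl
    · intro hmem
      exact absurd (Finset.mem_range.2 (by omega)) hmem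
  · rw [if_neg h]
    apply Finset.sum_eq_zero
    intro i _
    rw [if_neg]; rintro ⟨-, h2⟩; exact h h2

lemma substX_sum {ι : Type*} (c : K) (s : Finset ι) (f : ι → MvPolynomial (Fin 2) K) :
    substX c (∑ x ∈ s, f x) = ∑ x ∈ s, substX c (f x) := by
  unfold substX; exact map_sum _ _ _

lemma coeff_substX (c : K) (P : MvPolynomial (Fin 2) K) (d : Fin 2 →₀ ℕ) :
    coeff d (substX c P) = c ^ (d 0) * coeff d P := by
  have key : ∀ (e : Fin 2 →₀ ℕ) (r : K),
      substX c (monomial e r) = monomial e (c ^ (e 0) * r) := by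
    intro e r
    have he : e = Finsupp.single (0 : Fin 2) (e 0) + Finsupp.single (1 : Fin 2) (e 1) := by
      ext i; fin_cases i <;> simp
    rw [he]
    have hy : ∀ s : K, (monomial (Finsupp.single (1 : Fin 2) (e 1))) s
        = C s * X 1 ^ (e 1) := fun s => (C_mul_X_pow_eq_monomial).symm
    have h0 : ((Finsupp.single (0 : Fin 2) (e 0) + Finsupp.single (1 : Fin 2) (e 1)
        : Fin 2 →₀ ℕ)) 0 = e 0 := by simp
    rw [h0, monomial_single_add, monomial_single_add, hy, hy, substX, map_mul, map_mul,
      map_pow, map_pow, aeval_X, aeval_X, aeval_C]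
    rw [if_pos rfl, if_neg (by norm_num : ¬(1:Fin 2) = 0), algebraMap_eq, mul_pow, ← C_pow,
      map_mul]
    ring
  conv_lhs => rw [P.as_sum]
  rw [substX_sum]
  simp only [key]
  rw [coeff_sum]
  rw [Finset.sum_eq_single d]
  · rw [coeff_monomial, if_pos rfl]
  · intro m _ hne
    rw [coeff_monomial, if_neg hne]
  · intro h
    rw [coeff_monomial, if_pos rfl, notMem_support_iff.1 h, mul_zero]

lemma sum_range_succ_eq_Icc (f : ℕ → K) (m : ℕ) :
    ∑ k ∈ Finset.range (m+1), f k = f 0 + ∑ k ∈ Finset.Icc 1 m, f k := by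
  induction m with
  | zero => simp
  | succ m ih => rw [Finset.sum_range_succ, ih, Finset.sum_Icc_succ_top (by omega)]; ring

lemma sum_Icc_one_eq_range (f : ℕ → K) (M : ℕ) :
    ∑ k ∈ Finset.Icc 1 M, f k = ∑ k ∈ Finset.range M, f (k+1) := by
  rw [← Finset.Ico_add_one_right_eq_Icc, Finset.sum_Ico_eq_sum_range]
  simp [Nat.add_comm]

lemma tri_succ (l : ℕ) (hl : 1 ≤ l) : l * (l - 1) / 2 = (l-1) * (l-2) / 2 + (l-1) := by
  obtain ⟨t, rfl⟩ : ∃ t, l = t + 1 := ⟨l - 1, by omega⟩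
  simp only [Nat.add_sub_cancel]
  cases t with
  | zero => simp
  | succ s =>
    have h : (s+1+1)*(s+1) = (s+1)*s + (s+1)*2 := by ring
    have h3 : s+1+1-2 = s := by omega
    rw [h3, h, Nat.add_mul_div_right _ _ (by norm_num)]

end Aux

section Key

variable {K : Type*} [Field K]

/-- The scalar coefficient identity behind the main theorem. -/
lemma key_identity (q : K) (hq0 : q ≠ 0)
    (hq : ∀ n : ℕ, 1 ≤ n → qInt q n ≠ 0)
    (a α β : ℕ → K) (hα0 : α 0 = 0)
    (Hα : ∀ m : ℕ, (if m = 0 then (0:K) else a m / qFact q (m - 1)) =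
      ∑ k ∈ Finset.range (m+1),
        α k / qFact q k * (a (m-k) * q ^ (m-k) / qFact q (m-k)))
    (Hβ : ∀ m : ℕ, a m / qFact q m =
      ∑ k ∈ Finset.range (m+1),
        β k / qFact q k * (a (m-k) * q ^ (m-k) / qFact q (m-k)))
    (n j l : ℕ) :
    (∑ k ∈ Finset.Icc 1 n,
      (q ^ (n-k) / qFact q k * α k *
          ((∏ i ∈ Finset.range k, qInt q (j+i+1)) * acoeff q a n (j+k) l)
        + q ^ (n-k) / qFact q k * (qInt q k * β (k-1)) *
          (if l = 0 then 0 else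
            (∏ i ∈ Finset.range k, qInt q (j+i+1)) * acoeff q a n (j+k) (l-1))))
      + q ^ n * (qInt q j * acoeff q a n j l)
      - qInt q n * (q ^ j * acoeff q a n j l) = 0 := by
  have hF : ∀ k, qFact q k ≠ 0 := qFact_ne_zero hq
  by_cases h : j + l ≤ n
  case neg =>
    rw [Finset.sum_eq_zero, acoeff, if_neg h]
    · ring
    · intro k hk
      rw [Finset.mem_Icc] at hk
      rw [acoeff, if_neg (by omega)]
      by_cases hl : l = 0
      · rw [if_pos hl]; ring
      · rw [if_neg hl, acoeff, if_neg (by omega)]; ring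
  case pos =>
  set m := n - j - l with hm
  set C0 : K := qFact q n * q ^ (l * (l-1) / 2) / (qFact q j * qFact q l) with hC0
  -- the α-sum
  have SA : ∑ k ∈ Finset.Icc 1 n,
      q ^ (n-k) / qFact q k * α k *
          ((∏ i ∈ Finset.range k, qInt q (j+i+1)) * acoeff q a n (j+k) l)
      = C0 * (q ^ (j+l) * qInt q m * a m / qFact q m) := by
    have hcan : ∀ k ∈ Finset.Icc 1 n,
        q ^ (n-k) / qFact q k * α k *
            ((∏ i ∈ Finset.range k, qInt q (j+i+1)) * acoeff q a n (j+k) l)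
        = if k ≤ m then
            C0 * q ^ (n-m) * (α k / qFact q k * (a (m-k) * q ^ (m-k) / qFact q (m-k)))
          else 0 := by
      intro k hk
      rw [Finset.mem_Icc] at hk
      rw [acoeff]
      by_cases hkm : k ≤ m
      · rw [if_pos (show j+k+l ≤ n by omega), if_pos hkm]
        have e1 : n - (j+k) - l = m - k := by omega
        have e2 : qFact q (j+k) = qFact q j * ∏ i ∈ Finset.range k, qInt q (j+i+1) :=
          qFact_add q j k
        have e3 : (q:K) ^ (n-k) = q ^ (n-m) * q ^ (m-k) := by
          rw [← pow_add]; congr 1; omega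
        have hP : (∏ i ∈ Finset.range k, qInt q (j+i+1)) ≠ 0 :=
          Finset.prod_ne_zero_iff.2 fun i _ => hq (j+i+1) (by omega)
        rw [e1, e2, e3, hC0]
        field_simp [hF k, hF (m-k), hF j, hF l, hP]
      · rw [if_neg (show ¬(j+k+l ≤ n) by omega), if_neg hkm]
        ring
    rw [Finset.sum_congr rfl hcan]
    have hsub : ∑ k ∈ Finset.Icc 1 n, (if k ≤ m then
            C0 * q ^ (n-m) * (α k / qFact q k * (a (m-k) * q ^ (m-k) / qFact q (m-k)))
          else (0:K))
        = ∑ k ∈ Finset.Icc 1 m,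
            C0 * q ^ (n-m) * (α k / qFact q k * (a (m-k) * q ^ (m-k) / qFact q (m-k))) := by
      rw [← Finset.sum_subset (Finset.Icc_subset_Icc_right (by omega) :
          Finset.Icc 1 m ⊆ Finset.Icc 1 n)]
      · apply Finset.sum_congr rfl
        intro k hk
        rw [Finset.mem_Icc] at hk
        rw [if_pos hk.2]
      · intro k hk hk2
        rw [Finset.mem_Icc] at hk
        rw [Finset.mem_Icc] at hk2
        rw [if_neg (by omega)]
    rw [hsub]
    have hfull := sum_range_succ_eq_Icc
      (fun k => C0 * q ^ (n-m) * (α k / qFact q k * (a (m-k) * q ^ (m-k) / qFact q (m-k)))) m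
    have h0 : C0 * q ^ (n-m) * (α 0 / qFact q 0 * (a (m-0) * q ^ (m-0) / qFact q (m-0))) = 0 := by
      rw [hα0]; ring
    rw [h0, zero_add] at hfull
    rw [← hfull, ← Finset.mul_sum, ← Hα m]
    have hnm : n - m = j + l := by omega
    rw [hnm]
    by_cases hm0 : m = 0
    · rw [if_pos hm0, hm0, qInt_zero]; ring
    · rw [if_neg hm0]
      have : qFact q m = qFact q (m-1) * qInt q m := by
        conv_lhs => rw [show m = (m-1)+1 by omega]
        rw [qFact_succ, show m-1+1 = m by omega]
      rw [this]
      field_simp [hF (m-1), hF j, hF l, hq m (by omega)]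
  -- the β-sum
  have SB : ∑ k ∈ Finset.Icc 1 n,
      q ^ (n-k) / qFact q k * (qInt q k * β (k-1)) *
          (if l = 0 then 0 else
            (∏ i ∈ Finset.range k, qInt q (j+i+1)) * acoeff q a n (j+k) (l-1))
      = C0 * (q ^ j * qInt q l * a m / qFact q m) := by
    by_cases hl : l = 0
    · simp only [if_pos hl]
      rw [hl, qInt_zero]
      rw [Finset.sum_eq_zero (fun k _ => by ring)]
      ring
    · simp only [if_neg hl]
      have hl1 : 1 ≤ l := by omega
      have hm1 : m + 1 ≤ n := by omega
      set C1 : K := qFact q n * q ^ ((l-1) * (l-2) / 2) / (qFact q j * qFact q (l-1)) with hC1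
      have hcan : ∀ k ∈ Finset.Icc 1 n,
          q ^ (n-k) / qFact q k * (qInt q k * β (k-1)) *
              ((∏ i ∈ Finset.range k, qInt q (j+i+1)) * acoeff q a n (j+k) (l-1))
          = if k ≤ m+1 then
              C1 * (q ^ (n-k) * (β (k-1) / qFact q (k-1)
                * (a (m+1-k) / qFact q (m+1-k))))
            else 0 := by
        intro k hk
        rw [Finset.mem_Icc] at hk
        rw [acoeff]
        by_cases hkm : k ≤ m+1
        · rw [if_pos (show j+k+(l-1) ≤ n by omega), if_pos hkm]
          have e1 : n - (j+k) - (l-1) = m+1-k := by omega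
          have e2 : qFact q (j+k) = qFact q j * ∏ i ∈ Finset.range k, qInt q (j+i+1) :=
            qFact_add q j k
          have e4 : qFact q k = qFact q (k-1) * qInt q k := by
            conv_lhs => rw [show k = (k-1)+1 by omega]
            rw [qFact_succ, show k-1+1 = k by omega]
          have hP : (∏ i ∈ Finset.range k, qInt q (j+i+1)) ≠ 0 :=
            Finset.prod_ne_zero_iff.2 fun i _ => hq (j+i+1) (by omega)
          have hqk : qInt q k ≠ 0 := hq k (by omega)
          rw [e1, e2, e4, hC1, show l-1-1 = l-2 from by omega]
          field_simp [hF (k-1), hF (m+1-k), hF j, hF (l-1), hP, hqk]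
        · rw [if_neg (show ¬(j+k+(l-1) ≤ n) by omega), if_neg hkm]
          ring
      rw [Finset.sum_congr rfl hcan]
      have hsub : ∑ k ∈ Finset.Icc 1 n, (if k ≤ m+1 then
              C1 * (q ^ (n-k) * (β (k-1) / qFact q (k-1) * (a (m+1-k) / qFact q (m+1-k))))
            else (0:K))
          = ∑ k ∈ Finset.Icc 1 (m+1),
              C1 * (q ^ (n-k) * (β (k-1) / qFact q (k-1) * (a (m+1-k) / qFact q (m+1-k)))) := by
        rw [← Finset.sum_subset (Finset.Icc_subset_Icc_right (by omega) :
            Finset.Icc 1 (m+1) ⊆ Finset.Icc 1 n)]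
        · apply Finset.sum_congr rfl
          intro k hk
          rw [Finset.mem_Icc] at hk
          rw [if_pos hk.2]
        · intro k hk hk2
          rw [Finset.mem_Icc] at hk
          rw [Finset.mem_Icc] at hk2
          rw [if_neg (by omega)]
      rw [hsub, sum_Icc_one_eq_range]
      have hterm : ∀ k ∈ Finset.range (m+1),
          C1 * (q ^ (n-(k+1)) * (β (k+1-1) / qFact q (k+1-1)
            * (a (m+1-(k+1)) / qFact q (m+1-(k+1)))))
          = C1 * q ^ (n-1-m) * (β k / qFact q k * (a (m-k) * q ^ (m-k) / qFact q (m-k))) := by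
        intro k hk
        rw [Finset.mem_range] at hk
        have e1 : k+1-1 = k := by omega
        have e2 : m+1-(k+1) = m-k := by omega
        have e3 : (q:K) ^ (n-(k+1)) = q ^ (n-1-m) * q ^ (m-k) := by
          rw [← pow_add]; congr 1; omega
        rw [e1, e2, e3]
        ring
      rw [Finset.sum_congr rfl hterm, ← Finset.mul_sum, ← Hβ m]
      -- now identify the constants
      have e5 : qFact q l = qFact q (l-1) * qInt q l := by
        conv_lhs => rw [show l = (l-1)+1 by omega]
        rw [qFact_succ, show l-1+1 = l by omega]
      have e6 : (q:K) ^ (l * (l-1) / 2) = q ^ ((l-1) * (l-2) / 2) * q ^ (l-1) := by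
        rw [← pow_add, tri_succ l hl1]
      have e7 : (q:K) ^ (n-1-m) = q ^ j * q ^ (l-1) := by
        rw [← pow_add]; congr 1; omega
      rw [hC0, hC1, e5, e6, e7]
      field_simp [hF j, hF (l-1), hF m, hq l (by omega)]
  rw [Finset.sum_add_distrib, SA, SB, acoeff, if_pos h, ← hm]
  have e1 : qInt q n = qInt q l + q^l * qInt q m + (q^l * q^m) * qInt q j := by
    rw [show n = l + m + j by omega, qInt_add, qInt_add, pow_add]
    try ring
  have e2 : (q:K)^n = q^l * q^m * q^j := by
    rw [show n = l + m + j by omega, pow_add, pow_add]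
  have e3 : (q:K)^(j+l) = q^j * q^l := pow_add q j l
  rw [e1, e2, e3, hC0]
  field_simp [hF j, hF l, hF m]
  first
  | ring
  | (rw [div_eq_iff (by simp [hF])]; ring)

end Key

/-- Partial `q`-difference equation in `x` for 2D `q`-Appell polynomials. -/
theorem appell_qDifference_x
    {K : Type*} [Field K] [CharZero K] (q : K) (hq0 : q ≠ 0) (hq1 : q ≠ 1)
    (hq : ∀ n : ℕ, 1 ≤ n → qInt q n ≠ 0)
    (a : ℕ → K) (ha0 : a 0 ≠ 0)
    (α β : ℕ → K)
    (hα : PowerSeries.mk (fun n => if n = 0 then (0 : K) else a n / qFact q (n - 1)) =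
      PowerSeries.mk (fun n => α n / qFact q n) *
        PowerSeries.mk (fun n => a n * q ^ n / qFact q n))
    (hβ : PowerSeries.mk (fun n => a n / qFact q n) =
      PowerSeries.mk (fun n => β n / qFact q n) *
        PowerSeries.mk (fun n => a n * q ^ n / qFact q n))
    (n : ℕ) (hn : 1 ≤ n) :
    (∑ k ∈ Finset.Icc 1 n, C (q ^ (n - k) / qFact q k) *
        (C (α k) + C (qInt q k * β (k - 1)) * X 1) * (qDeriv q 0)^[k] (appell q a n)) +
      C (q ^ n) * X 0 * qDeriv q 0 (appell q a n) -
      C (qInt q n) * substX q (appell q a n) = 0 := by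
  -- extract coefficient identities from the power series hypotheses
  have Hα : ∀ m : ℕ, (if m = 0 then (0:K) else a m / qFact q (m - 1)) =
      ∑ k ∈ Finset.range (m+1),
        α k / qFact q k * (a (m-k) * q ^ (m-k) / qFact q (m-k)) := by
    intro m
    have h' := congrArg (PowerSeries.coeff m) hα
    rw [PowerSeries.coeff_mk, PowerSeries.coeff_mul,
      Finset.Nat.sum_antidiagonal_eq_sum_range_succ_mk] at h'
    simp only [PowerSeries.coeff_mk] at h'
    exact h'

  have Hβ : ∀ m : ℕ, a m / qFact q m =
      ∑ k ∈ Finset.range (m+1),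
        β k / qFact q k * (a (m-k) * q ^ (m-k) / qFact q (m-k)) := by
    intro m
    have h' := congrArg (PowerSeries.coeff m) hβ
    rw [PowerSeries.coeff_mk, PowerSeries.coeff_mul,
      Finset.Nat.sum_antidiagonal_eq_sum_range_succ_mk] at h'
    simp only [PowerSeries.coeff_mk] at h'
    exact h'
  have hα0 : α 0 = 0 := by
    have := Hα 0
    simp [qFact_zero] at this
    rcases this with h | h
    · exact h
    · exact absurd h ha0
  -- compare coefficients
  refine MvPolynomial.ext _ _ fun d => ?_
  obtain ⟨j, l, rfl⟩ : ∃ j l, d = Finsupp.single (0 : Fin 2) j + Finsupp.single (1 : Fin 2) l :=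
    ⟨d 0, d 1, finsupp_fin2_eq d⟩
  rw [coeff_sub, coeff_add, coeff_sum, coeff_zero]
  set D := Finsupp.single (0 : Fin 2) j + Finsupp.single (1 : Fin 2) l with hD
  -- term 3
  have h3 : coeff D (C (qInt q n) * substX q (appell q a n))
      = qInt q n * (q ^ j * acoeff q a n j l) := by
    rw [coeff_C_mul, coeff_substX, hD, pair_apply_zero, coeff_appell]
  -- term 2
  have h2 : coeff D (C (q ^ n) * X 0 * qDeriv q 0 (appell q a n))
      = q ^ n * (qInt q j * acoeff q a n j l) := by
    have hrw : C (q ^ n) * X 0 * qDeriv q 0 (appell q a n)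
        = C (q ^ n) * (qDeriv q 0 (appell q a n) * X 0) := by ring
    rw [hrw, coeff_C_mul, coeff_mul_X']
    by_cases hj : j = 0
    · rw [if_neg, hj, qInt_zero]
      · ring
      · rw [Finsupp.mem_support_iff, hD, pair_apply_zero, hj]
        simp
    · rw [if_pos, hD, pair_sub_single0, coeff_qDeriv, pair_apply_zero, pair_add_single0,
        show j - 1 + 1 = j by omega, coeff_appell]
      · rw [Finsupp.mem_support_iff, hD, pair_apply_zero]
        exact hj
  -- term 1 summands
  have h1 : ∀ k ∈ Finset.Icc 1 n,
      coeff D (C (q ^ (n - k) / qFact q k) *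
        (C (α k) + C (qInt q k * β (k - 1)) * X 1) * (qDeriv q 0)^[k] (appell q a n))
      = q ^ (n-k) / qFact q k * α k *
          ((∏ i ∈ Finset.range k, qInt q (j+i+1)) * acoeff q a n (j+k) l)
        + q ^ (n-k) / qFact q k * (qInt q k * β (k-1)) *
          (if l = 0 then 0 else
            (∏ i ∈ Finset.range k, qInt q (j+i+1)) * acoeff q a n (j+k) (l-1)) := by
    intro k hk
    have hrw : C (q ^ (n - k) / qFact q k) *
        (C (α k) + C (qInt q k * β (k - 1)) * X 1) * (qDeriv q 0)^[k] (appell q a n)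
        = C (q ^ (n - k) / qFact q k * α k) * (qDeriv q 0)^[k] (appell q a n)
          + C (q ^ (n - k) / qFact q k * (qInt q k * β (k - 1))) *
            ((qDeriv q 0)^[k] (appell q a n) * X 1) := by
      simp only [map_mul]; ring
    rw [hrw, coeff_add, coeff_C_mul, coeff_C_mul, coeff_mul_X']
    congr 1
    · rw [coeff_qDeriv_iter, hD, pair_apply_zero, pair_add_single0, coeff_appell, mul_assoc]
    · by_cases hl : l = 0
      · rw [if_neg, if_pos hl, mul_zero]
        rw [Finsupp.mem_support_iff, hD, pair_apply_one, hl]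
        simp
      · rw [if_pos, if_neg hl, hD, pair_sub_single1, coeff_qDeriv_iter, pair_apply_zero,
          pair_add_single0, coeff_appell, mul_assoc]
        rw [Finsupp.mem_support_iff, hD, pair_apply_one]
        exact hl
  rw [Finset.sum_congr rfl h1, h2, h3]
  exact key_identity q hq0 hq a α β hα0 Hα Hβ n j l
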